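/- Refined elasticity equality via spanning tree packing: Let G = (V,E,r) be a graph with V nonempty and let k ≥ 2. There exists an element a ∈ A(G) that can be written both as a sum of k atoms and as a sum of (k − 1)·|V| + 1 atoms if and only if G contains k pairwise edge-disjoint spanning trees, i.e., there exist pairwise disjoint subsets E₁, …, E_k ⊆ E such that for each i one has |E_i| = |V| − 1 and any two vertices of V are joined by a walk using only edges in E_i. -/

import Mathlib

/-- An agglomeration on the graph given by `r : E → Sym2 V`. -/
def IsAgg {V E : Type*} (r : E → Sym2 V) (a : (V → ℕ) × (E → ℕ)) : Prop :=
  ∀ (e : E) (v : V), v ∈ r e → a.2 e ≤ a.1 v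

/-- An atom of the monoid of agglomerations. -/
def IsAtomAgg {V E : Type*} (r : E → Sym2 V) (a : (V → ℕ) × (E → ℕ)) : Prop :=
  IsAgg r a ∧ a ≠ 0 ∧
    ∀ b c : (V → ℕ) × (E → ℕ), IsAgg r b → IsAgg r c → a = b + c → b = 0 ∨ c = 0

/-- `AggJoined r E' x y`: `x` and `y` are joined by a walk using only edges in `E'`. -/
def AggJoined {V E : Type*} (r : E → Sym2 V) (E' : Set E) : V → V → Prop :=
  Relation.ReflTransGen (fun x y => ∃ e ∈ E', r e = s(x, y))

section Basics
variable {V E : Type*} (r : E → Sym2 V)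

lemma aggJoined_refl (Es : Set E) (x : V) : AggJoined r Es x x := Relation.ReflTransGen.refl

lemma aggJoined_symm {Es : Set E} {x y : V} (h : AggJoined r Es x y) : AggJoined r Es y x := by
  refine @Std.Symm.symm _ _ (@Relation.ReflTransGen.stdSymm _ _ ⟨?_⟩) _ _ h
  rintro u w ⟨e, he, hre⟩
  exact ⟨e, he, by rwa [Sym2.eq_swap]⟩

lemma aggJoined_trans {Es : Set E} {x y z : V} (h : AggJoined r Es x y)
    (h' : AggJoined r Es y z) : AggJoined r Es x z := h.trans h'

lemma aggJoined_mono {Es Es' : Set E} (hss : Es ⊆ Es') {x y : V}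
    (h : AggJoined r Es x y) : AggJoined r Es' x y := by
  refine Relation.ReflTransGen.mono ?_ _ _ h
  rintro u w ⟨e, he, hre⟩
  exact ⟨e, hss he, hre⟩

lemma aggJoined_empty {x y : V} (h : AggJoined r (∅ : Set E) x y) : x = y := by
  induction h with
  | refl => rfl
  | tail _ h2 ih => exact absurd h2 (by rintro ⟨e, he, -⟩; exact he)

lemma aggJoined_step {Es : Set E} {e : E} {x y : V} (he : e ∈ Es) (hre : r e = s(x, y)) :
    AggJoined r Es x y := Relation.ReflTransGen.single ⟨e, he, hre⟩

/-- The setoid of `AggJoined`. -/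
def aggSetoid (Es : Set E) : Setoid V :=
  ⟨AggJoined r Es, ⟨aggJoined_refl r Es, aggJoined_symm r, aggJoined_trans r⟩⟩

lemma sym2_nondiag {z : Sym2 V} (h : ¬ z.IsDiag) : ∃ x y : V, x ≠ y ∧ z = s(x, y) := by
  induction z using Sym2.inductionOn with
  | hf x y => exact ⟨x, y, fun hxy => h (by simp [hxy]), rfl⟩

end Basics

section Counting
variable {V E : Type*} [Fintype V] (r : E → Sym2 V)

/-- number of connected classes -/
noncomputable def aggQ (Es : Set E) : ℕ := Nat.card (Quotient (aggSetoid r Es))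

lemma aggQ_pos [Nonempty V] (Es : Set E) : 1 ≤ aggQ r Es := by
  have : Nonempty (Quotient (aggSetoid r Es)) := ⟨⟦Classical.arbitrary V⟧⟩
  exact Nat.card_pos

lemma aggQ_le_card (Es : Set E) : aggQ r Es ≤ Fintype.card V := by
  have := Nat.card_le_card_of_injective _ (Quotient.out_injective (s := aggSetoid r Es))
  simpa [aggQ, Nat.card_eq_fintype_card] using this

lemma aggQ_empty : aggQ r (∅ : Set E) = Fintype.card V := by
  refine le_antisymm (aggQ_le_card r _) ?_
  have hinj : Function.Injective (fun v : V => (⟦v⟧ : Quotient (aggSetoid r ∅))) := by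
    intro x y h
    exact aggJoined_empty r (Quotient.exact h)
  have := Nat.card_le_card_of_injective _ hinj
  simpa [aggQ, Nat.card_eq_fintype_card] using this

end Counting

section Steps
variable {V E : Type*} [Fintype V] (r : E → Sym2 V)

/-- Transfer lemma: a walk in `F₀ ∪ W` either is a walk in `W`, or both endpoints
connect to `A` within `W`, provided all `F₀`-edges have endpoints in `A`. -/
lemma join_union_cases {F₀ W : Set E} {A : Finset V}
    (hend : ∀ e ∈ F₀, ∀ v, v ∈ r e → v ∈ A)
    {v w : V} (h : AggJoined r (F₀ ∪ W) v w) :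
    AggJoined r W v w ∨ ((∃ a ∈ A, AggJoined r W v a) ∧ (∃ a ∈ A, AggJoined r W w a)) := by
  induction h with
  | refl => exact Or.inl Relation.ReflTransGen.refl
  | @tail b c h1 h2 ih =>
    obtain ⟨e, he, hre⟩ := h2
    rcases he with heF | heW
    · -- edge in F₀ : endpoints b, c ∈ A
      have hbA : b ∈ A := hend e heF b (by rw [hre]; simp)
      have hcA : c ∈ A := hend e heF c (by rw [hre]; simp)
      refine Or.inr ⟨?_, ⟨c, hcA, aggJoined_refl r _ _⟩⟩
      rcases ih with h | ⟨hv, _⟩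
      · exact ⟨b, hbA, h⟩
      · exact hv
    · rcases ih with h | ⟨hv, hw⟩
      · exact Or.inl (h.tail ⟨e, heW, hre⟩)
      · refine Or.inr ⟨hv, ?_⟩
        obtain ⟨a, ha, haj⟩ := hw
        exact ⟨a, ha, aggJoined_trans r (aggJoined_symm r (aggJoined_step r heW hre)) haj⟩

variable [Fintype E]

/-- Key counting step: attaching a connected piece `F₀` with vertex set `A` reduces the
number of classes by at most `A.card - 1`. -/
lemma count_step {F₀ W : Set E} {A : Finset V} (hA : A.Nonempty)
    (hend : ∀ e ∈ F₀, ∀ v, v ∈ r e → v ∈ A)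
    (hconn : ∀ x ∈ A, ∀ y ∈ A, AggJoined r F₀ x y) :
    aggQ r W + 1 ≤ aggQ r (F₀ ∪ W) + A.card := by
  classical
  obtain ⟨a₀, ha₀⟩ := hA
  set sW := aggSetoid r W with hsW
  set sU := aggSetoid r (F₀ ∪ W) with hsU
  have exact_sU : ∀ {x y : V}, (⟦x⟧ : Quotient sU) = ⟦y⟧ → AggJoined r (F₀ ∪ W) x y :=
    fun {x y} h => Quotient.exact h
  have exact_sW : ∀ {x y : V}, AggJoined r W x y → (⟦x⟧ : Quotient sW) = ⟦y⟧ :=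
    fun {x y} h => Quotient.sound h
  let conn : Quotient sW → Prop := fun K => ∃ a ∈ A, AggJoined r W K.out a
  let φ : Quotient sW ⊕ Unit → Quotient sU ⊕ ↥A := fun z =>
    match z with
    | Sum.inr _ => Sum.inl (⟦a₀⟧ : Quotient sU)
    | Sum.inl K =>
      if h : conn K then Sum.inr ⟨h.choose, h.choose_spec.1⟩
      else Sum.inl (⟦K.out⟧ : Quotient sU)
  have key : ∀ K : Quotient sW, ¬ conn K →
      ∀ y, (⟦K.out⟧ : Quotient sU) = ⟦y⟧ → AggJoined r W K.out y := by
    intro K hK y hy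
    rcases join_union_cases r hend (exact_sU hy) with hh | ⟨hv, _⟩
    · exact hh
    · exact absurd hv hK
  have outinj : ∀ {K K' : Quotient sW}, AggJoined r W K.out K'.out → K = K' := by
    intro K K' hj
    conv_lhs => rw [← Quotient.out_eq K]
    conv_rhs => rw [← Quotient.out_eq K']
    exact Quotient.sound hj
  have hφ : Function.Injective φ := by
    rintro (K | u) (K' | u') h
    · by_cases h1 : conn K <;> by_cases h2 : conn K'
      · simp only [φ, dif_pos h1, dif_pos h2] at h
        have hcc : h1.choose = h2.choose := congrArg Subtype.val (Sum.inr.inj h)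
        have hj : AggJoined r W K.out K'.out :=
          aggJoined_trans r h1.choose_spec.2
            (by rw [hcc]; exact aggJoined_symm r h2.choose_spec.2)
        exact congrArg Sum.inl (outinj hj)
      · simp only [φ, dif_pos h1, dif_neg h2] at h
        exact nomatch h
      · simp only [φ, dif_neg h1, dif_pos h2] at h
        exact nomatch h
      · simp only [φ, dif_neg h1, dif_neg h2] at h
        exact congrArg Sum.inl (outinj (key K h1 _ (Sum.inl.inj h)))
    · exfalso
      by_cases h1 : conn K
      · simp only [φ, dif_pos h1] at h
        exact nomatch h
      · simp only [φ, dif_neg h1] at h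
        exact h1 ⟨a₀, ha₀, key K h1 _ (Sum.inl.inj h)⟩
    · exfalso
      by_cases h2 : conn K'
      · simp only [φ, dif_pos h2] at h
        exact nomatch h
      · simp only [φ, dif_neg h2] at h
        exact h2 ⟨a₀, ha₀, key K' h2 _ (Sum.inl.inj h.symm)⟩
    · rfl
  have hcard := Nat.card_le_card_of_injective φ hφ
  have h1 : Nat.card (Quotient sW ⊕ Unit) = aggQ r W + 1 := by
    rw [Nat.card_sum]; simp [aggQ]
    exact Fintype.card_congr (Equiv.refl _)
  have h2 : Nat.card (Quotient sU ⊕ ↥A) = aggQ r (F₀ ∪ W) + A.card := by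
    rw [Nat.card_sum]; simp [aggQ, Nat.card_eq_fintype_card]
    exact Fintype.card_congr (Equiv.refl _)
  rw [h1, h2] at hcard
  exact hcard

/-- Refined counting step: if two distinct elements of `A` are already joined in `W`,
the bound improves by one. -/
lemma count_step_refined {F₀ W : Set E} {A : Finset V}
    (hend : ∀ e ∈ F₀, ∀ v, v ∈ r e → v ∈ A)
    (hconn : ∀ x ∈ A, ∀ y ∈ A, AggJoined r F₀ x y)
    {y z : V} (hyA : y ∈ A) (hzA : z ∈ A) (hyz : y ≠ z) (hjoin : AggJoined r W y z) :
    aggQ r W + 2 ≤ aggQ r (F₀ ∪ W) + A.card := by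
  classical
  set sW := aggSetoid r W with hsW
  set sU := aggSetoid r (F₀ ∪ W) with hsU
  have exact_sU : ∀ {u w : V}, (⟦u⟧ : Quotient sU) = ⟦w⟧ → AggJoined r (F₀ ∪ W) u w :=
    fun {u w} h => Quotient.exact h
  let conn : Quotient sW → Prop := fun K => ∃ a ∈ A, AggJoined r W K.out a
  have key : ∀ K : Quotient sW, ¬ conn K →
      ∀ w, (⟦K.out⟧ : Quotient sU) = ⟦w⟧ → AggJoined r W K.out w := by
    intro K hK w hw
    rcases join_union_cases r hend (exact_sU hw) with hh | ⟨hv, _⟩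
    · exact hh
    · exact absurd hv hK
  have outinj : ∀ {K K' : Quotient sW}, AggJoined r W K.out K'.out → K = K' := by
    intro K K' hj
    conv_lhs => rw [← Quotient.out_eq K]
    conv_rhs => rw [← Quotient.out_eq K']
    exact Quotient.sound hj
  have mk_out : ∀ w : V, AggJoined r W (Quotient.out (⟦w⟧ : Quotient sW)) w := by
    intro w; exact Quotient.exact (Quotient.out_eq (⟦w⟧ : Quotient sW))
  have connKy : conn (⟦y⟧ : Quotient sW) := ⟨y, hyA, mk_out y⟩
  set w₀ : V := if connKy.choose = y then z else y with hw₀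
  have hw₀A : w₀ ∈ A := by rw [hw₀]; split <;> assumption
  have hw₀cls : AggJoined r W y w₀ := by
    rw [hw₀]; split
    · exact hjoin
    · exact aggJoined_refl r _ _
  have hchooser : ∀ (K : Quotient sW) (h : conn K), h.choose ≠ w₀ := by
    intro K h hcontra
    have h1 : AggJoined r W K.out w₀ := hcontra ▸ h.choose_spec.2
    have h2 : AggJoined r W (Quotient.out (⟦y⟧ : Quotient sW)) w₀ :=
      aggJoined_trans r (mk_out y) hw₀cls
    have hKKy : K = (⟦y⟧ : Quotient sW) := outinj (aggJoined_trans r h1 (aggJoined_symm r h2))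
    subst hKKy
    have hcon2 : connKy.choose = w₀ := hcontra
    rw [hw₀] at hcon2
    by_cases hc : connKy.choose = y
    · rw [if_pos hc] at hcon2; rw [hc] at hcon2; exact hyz hcon2
    · rw [if_neg hc] at hcon2; exact hc hcon2
  let φ : Quotient sW ⊕ Bool → Quotient sU ⊕ ↥A := fun v =>
    match v with
    | Sum.inr true => Sum.inr ⟨w₀, hw₀A⟩
    | Sum.inr false => Sum.inl (⟦y⟧ : Quotient sU)
    | Sum.inl K =>
      if h : conn K then Sum.inr ⟨h.choose, h.choose_spec.1⟩
      else Sum.inl (⟦K.out⟧ : Quotient sU)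
  have hφ : Function.Injective φ := by
    rintro (K | (b|b)) (K' | (b'|b')) h
    · by_cases h1 : conn K <;> by_cases h2 : conn K'
      · simp only [φ, dif_pos h1, dif_pos h2] at h
        have hcc : h1.choose = h2.choose := congrArg Subtype.val (Sum.inr.inj h)
        have hj : AggJoined r W K.out K'.out :=
          aggJoined_trans r h1.choose_spec.2
            (by rw [hcc]; exact aggJoined_symm r h2.choose_spec.2)
        exact congrArg Sum.inl (outinj hj)
      · simp only [φ, dif_pos h1, dif_neg h2] at h
        exact nomatch h
      · simp only [φ, dif_neg h1, dif_pos h2] at h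
        exact nomatch h
      · simp only [φ, dif_neg h1, dif_neg h2] at h
        exact congrArg Sum.inl (outinj (key K h1 _ (Sum.inl.inj h)))
    · -- K vs false
      exfalso
      by_cases h1 : conn K
      · simp only [φ, dif_pos h1] at h
        exact nomatch h
      · simp only [φ, dif_neg h1] at h
        exact h1 ⟨y, hyA, key K h1 _ (Sum.inl.inj h)⟩
    · -- K vs true
      exfalso
      by_cases h1 : conn K
      · simp only [φ, dif_pos h1] at h
        exact hchooser K h1 (congrArg Subtype.val (Sum.inr.inj h))
      · simp only [φ, dif_neg h1] at h
        exact nomatch h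
    · exfalso
      by_cases h2 : conn K'
      · simp only [φ, dif_pos h2] at h
        exact nomatch h
      · simp only [φ, dif_neg h2] at h
        exact h2 ⟨y, hyA, key K' h2 _ (Sum.inl.inj h.symm)⟩
    · rfl
    · simp only [φ] at h
      exact nomatch h
    · exfalso
      by_cases h2 : conn K'
      · simp only [φ, dif_pos h2] at h
        exact hchooser K' h2 (congrArg Subtype.val (Sum.inr.inj h.symm))
      · simp only [φ, dif_neg h2] at h
        exact nomatch h
    · simp only [φ] at h
      exact nomatch h
    · rfl
  have hcard := Nat.card_le_card_of_injective φ hφ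
  have h1 : Nat.card (Quotient sW ⊕ Bool) = aggQ r W + 2 := by
    rw [Nat.card_sum]; simp [aggQ, Nat.card_eq_fintype_card]
    exact Fintype.card_congr (Equiv.refl _)
  have h2 : Nat.card (Quotient sU ⊕ ↥A) = aggQ r (F₀ ∪ W) + A.card := by
    rw [Nat.card_sum]; simp [aggQ, Nat.card_eq_fintype_card]
    exact Fintype.card_congr (Equiv.refl _)
  rw [h1, h2] at hcard
  exact hcard

/-- If all of `S` is joined within `U`, then the number of classes plus `S.card`
is at most `card V + 1`. -/
lemma conn_bound {U : Set E} {S : Finset V}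
    (hS : ∀ x ∈ S, ∀ y ∈ S, AggJoined r U x y) :
    aggQ r U + S.card ≤ Fintype.card V + 1 := by
  classical
  set sU := aggSetoid r U with hsU
  let connS : Quotient sU → Prop := fun K => ∃ x ∈ S, AggJoined r U K.out x
  let φ : Quotient sU → ↥((Finset.univ : Finset V) \ S) ⊕ Unit := fun K =>
    if h : connS K then Sum.inr ()
    else Sum.inl ⟨K.out, by
      simp only [Finset.mem_sdiff, Finset.mem_univ, true_and]
      intro hmem
      exact h ⟨K.out, hmem, aggJoined_refl r _ _⟩⟩
  have outinj : ∀ {K K' : Quotient sU}, AggJoined r U K.out K'.out → K = K' := by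
    intro K K' hj
    conv_lhs => rw [← Quotient.out_eq K]
    conv_rhs => rw [← Quotient.out_eq K']
    exact Quotient.sound hj
  have hφ : Function.Injective φ := by
    intro K K' h
    by_cases h1 : connS K <;> by_cases h2 : connS K'
    · obtain ⟨x, hx, hjx⟩ := h1
      obtain ⟨x', hx', hjx'⟩ := h2
      exact outinj (aggJoined_trans r hjx (aggJoined_trans r (hS x hx x' hx')
        (aggJoined_symm r hjx')))
    · simp only [φ, dif_pos h1, dif_neg h2] at h
      exact nomatch h
    · simp only [φ, dif_neg h1, dif_pos h2] at h
      exact nomatch h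
    · simp only [φ, dif_neg h1, dif_neg h2] at h
      have hout : K.out = K'.out := congrArg Subtype.val (Sum.inl.inj h)
      exact Quotient.out_injective hout
  have hcard := Nat.card_le_card_of_injective φ hφ
  have h2 : Nat.card (↥((Finset.univ : Finset V) \ S) ⊕ Unit)
      = ((Finset.univ : Finset V) \ S).card + 1 := by
    rw [Nat.card_sum, Nat.card_eq_fintype_card, Fintype.card_coe, Nat.card_unique]
  rw [h2] at hcard
  have h3 : ((Finset.univ : Finset V) \ S).card + S.card = Fintype.card V := by
    rw [Finset.card_sdiff_add_card_eq_card (Finset.subset_univ S), Finset.card_univ]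
  calc aggQ r U + S.card ≤ (((Finset.univ : Finset V) \ S).card + 1) + S.card := by
        exact Nat.add_le_add_right hcard _
    _ = Fintype.card V + 1 := by omega

lemma aggQ_le_one_of_all_joined {U : Set E} (hall : ∀ x y : V, AggJoined r U x y) :
    aggQ r U ≤ 1 := by
  classical
  have hφ : Function.Injective (fun _ : Quotient (aggSetoid r U) => ()) := by
    intro K K' _
    conv_lhs => rw [← Quotient.out_eq K]
    conv_rhs => rw [← Quotient.out_eq K']
    exact Quotient.sound (hall _ _)
  have := Nat.card_le_card_of_injective _ hφ
  simpa [aggQ, Nat.card_unique] using this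

lemma all_joined_of_aggQ_le_one {U : Set E} (h : aggQ r U ≤ 1) (x y : V) :
    AggJoined r U x y := by
  classical
  by_contra hxy
  have hne : (⟦x⟧ : Quotient (aggSetoid r U)) ≠ ⟦y⟧ := fun hc => hxy (Quotient.exact hc)
  have hφ : Function.Injective
      (fun b : Bool => cond b (⟦x⟧ : Quotient (aggSetoid r U)) ⟦y⟧) := by
    intro b b' hb
    cases b <;> cases b'
    · rfl
    · exact absurd hb.symm hne
    · exact absurd hb hne
    · rfl
  have := Nat.card_le_card_of_injective _ hφ
  simp only [Nat.card_eq_fintype_card, Fintype.card_bool] at this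
  have : (2 : ℕ) ≤ aggQ r U := by
    simpa [aggQ, Nat.card_eq_fintype_card] using this
  omega

/-- Walks transfer when all edges have joined endpoints. -/
lemma joined_transfer {T F : Set E}
    (h : ∀ e ∈ F, ∀ u w : V, r e = s(u, w) → AggJoined r T u w)
    {x y : V} (hF : AggJoined r F x y) : AggJoined r T x y := by
  induction hF with
  | refl => exact aggJoined_refl r _ _
  | tail _ h2 ih =>
    obtain ⟨e, he, hre⟩ := h2
    exact aggJoined_trans r ih (h e he _ _ hre)

variable (hr : ∀ e : E, ¬ (r e).IsDiag)
include hr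

/-- Forest bound: each edge can decrease the number of classes by at most one. -/
lemma forest_bound (T : Finset E) :
    Fintype.card V ≤ aggQ r ↑T + T.card := by
  classical
  induction T using Finset.induction with
  | empty => simp [aggQ_empty]
  | @insert a T ha ih =>
    obtain ⟨x, y, hxy, hre⟩ := sym2_nondiag (hr a)
    have hstep := count_step r (F₀ := {a}) (W := ↑T) (A := {x, y})
      ⟨x, by simp⟩
      (by rintro e (rfl : e = a) v hv
          rw [hre] at hv
          rcases Sym2.mem_iff.mp hv with rfl | rfl <;> simp)
      (by have hs : AggJoined r {a} x y := aggJoined_step r rfl hre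
          intro u hu v hv
          simp only [Finset.mem_insert, Finset.mem_singleton] at hu hv
          rcases hu with rfl | rfl <;> rcases hv with rfl | rfl
          · exact aggJoined_refl r _ _
          · exact hs
          · exact aggJoined_symm r hs
          · exact aggJoined_refl r _ _)
    have hA : ({x, y} : Finset V).card = 2 := Finset.card_pair hxy
    rw [hA] at hstep
    have hcoe : (↑(insert a T) : Set E) = {a} ∪ ↑T := by
      rw [Finset.coe_insert, Set.insert_eq]
    rw [← hcoe] at hstep
    rw [Finset.card_insert_of_notMem ha]
    omega

omit hr

/-- Strict drop: inserting an edge whose endpoints were not joined strictly decreases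
the number of classes. -/
lemma insert_drop [DecidableEq E] {T : Finset E} {e : E} {x y : V} (hre : r e = s(x, y))
    (hnj : ¬ AggJoined r ↑T x y) :
    aggQ r ↑(insert e T) + 1 ≤ aggQ r ↑T := by
  classical
  set sI := aggSetoid r (↑(insert e T) : Set E) with hsI
  set sT := aggSetoid r (↑T : Set E) with hsT
  have hsub : (↑T : Set E) ⊆ ↑(insert e T) := by
    intro f hf; simp only [Finset.coe_insert, Set.mem_insert_iff]; right; exact hf
  have hTI : ∀ {u w : V}, AggJoined r ↑T u w → AggJoined r ↑(insert e T) u w :=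
    fun {u w} h => aggJoined_mono r hsub h
  have hxyI : AggJoined r ↑(insert e T) x y :=
    aggJoined_step r (by simp) hre
  have outinjI : ∀ {K K' : Quotient sI}, AggJoined r ↑(insert e T) K.out K'.out → K = K' := by
    intro K K' hj
    conv_lhs => rw [← Quotient.out_eq K]
    conv_rhs => rw [← Quotient.out_eq K']
    exact Quotient.sound hj
  have mk_outI : ∀ w : V, AggJoined r ↑(insert e T) (Quotient.out (⟦w⟧ : Quotient sI)) w := by
    intro w; exact Quotient.exact (Quotient.out_eq (⟦w⟧ : Quotient sI))
  have mk_outT : ∀ w : V, AggJoined r ↑T (Quotient.out (⟦w⟧ : Quotient sT)) w := by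
    intro w; exact Quotient.exact (Quotient.out_eq (⟦w⟧ : Quotient sT))
  let φ : Quotient sI ⊕ Unit → Quotient sT := fun z =>
    match z with
    | Sum.inr _ => (⟦y⟧ : Quotient sT)
    | Sum.inl K => if K = (⟦x⟧ : Quotient sI) then (⟦x⟧ : Quotient sT)
                   else (⟦K.out⟧ : Quotient sT)
  have hφ : Function.Injective φ := by
    rintro (K | u) (K' | u') h
    · by_cases h1 : K = (⟦x⟧ : Quotient sI) <;> by_cases h2 : K' = (⟦x⟧ : Quotient sI)
      · rw [h1, h2]
      · simp only [φ, if_pos h1, if_neg h2] at h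
        exfalso
        have : AggJoined r ↑T x K'.out := Quotient.exact h
        have : K' = (⟦x⟧ : Quotient sI) := by
          rw [← Quotient.out_eq K']
          exact Quotient.sound (aggJoined_symm r (hTI this))
        exact h2 this
      · simp only [φ, if_neg h1, if_pos h2] at h
        exfalso
        have : AggJoined r ↑T K.out x := Quotient.exact h
        exact h1 (by rw [← Quotient.out_eq K]; exact Quotient.sound (hTI this))
      · simp only [φ, if_neg h1, if_neg h2] at h
        exact congrArg Sum.inl (outinjI (hTI (Quotient.exact h)))
    · exfalso
      by_cases h1 : K = (⟦x⟧ : Quotient sI) <;> simp only [φ, if_pos, if_neg, h1] at h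
      · have : AggJoined r ↑T x y := Quotient.exact h
        exact hnj this
      · have hT : AggJoined r ↑T K.out y := Quotient.exact h
        have : K = (⟦y⟧ : Quotient sI) := by
          rw [← Quotient.out_eq K]; exact Quotient.sound (hTI hT)
        exact h1 (by rw [this]; exact Quotient.sound (aggJoined_symm r hxyI))
    · exfalso
      by_cases h2 : K' = (⟦x⟧ : Quotient sI) <;> simp only [φ, if_pos, if_neg, h2] at h
      · have : AggJoined r ↑T x y := Quotient.exact h.symm
        exact hnj this
      · have hT : AggJoined r ↑T K'.out y := Quotient.exact h.symm
        have : K' = (⟦y⟧ : Quotient sI) := by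
          rw [← Quotient.out_eq K']; exact Quotient.sound (hTI hT)
        exact h2 (by rw [this]; exact Quotient.sound (aggJoined_symm r hxyI))
    · rfl
  have hcard := Nat.card_le_card_of_injective φ hφ
  have h1 : Nat.card (Quotient sI ⊕ Unit) = aggQ r ↑(insert e T) + 1 := by
    have hu : Nat.card Unit = 1 := Nat.card_unique
    rw [Nat.card_sum, hu]
    rfl
  rw [h1] at hcard
  exact hcard

lemma exists_crossing {T F : Finset E} {x y : V}
    (hF : AggJoined r ↑F x y) (hxy : ¬ AggJoined r ↑T x y) :
    ∃ e ∈ F, ∃ u w : V, r e = s(u, w) ∧ ¬ AggJoined r ↑T u w := by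
  by_contra hcon
  push_neg at hcon
  exact hxy (joined_transfer r (fun e he u w hre => hcon e he u w hre) hF)

include hr in
lemma trim_aux [Nonempty V] {F : Finset E} (hconn : ∀ x y : V, AggJoined r ↑F x y) :
    ∀ (fuel : ℕ) (T : Finset E), T ⊆ F → aggQ r ↑T ≤ fuel →
      aggQ r ↑T + T.card ≤ Fintype.card V →
      ∃ T' : Finset E, T' ⊆ F ∧ T'.card + 1 = Fintype.card V ∧
        ∀ x y : V, AggJoined r ↑T' x y := by
  classical
  intro fuel
  induction fuel with
  | zero =>
    intro T _ hfuel _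
    exact absurd (aggQ_pos r ↑T) (by omega)
  | succ fuel ih =>
    intro T hTF hfuel hinv
    by_cases hall : ∀ x y : V, AggJoined r ↑T x y
    · refine ⟨T, hTF, ?_, hall⟩
      have h1 := aggQ_le_one_of_all_joined r hall
      have h2 := aggQ_pos r (↑T : Set E)
      have h3 := forest_bound r hr T
      omega
    · push_neg at hall
      obtain ⟨x, y, hxy⟩ := hall
      obtain ⟨e, heF, u, w, hre, hnj⟩ := exists_crossing r (hconn x y) hxy
      have heT : e ∉ T := fun heT => hnj (aggJoined_step r (Finset.mem_coe.mpr heT) hre)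
      have hdrop := insert_drop r hre hnj
      have hcard : (insert e T).card = T.card + 1 := Finset.card_insert_of_notMem heT
      exact ih (insert e T) (Finset.insert_subset heF hTF) (by omega) (by omega)

include hr in
lemma trim [Nonempty V] {F : Finset E} (hconn : ∀ x y : V, AggJoined r ↑F x y) :
    ∃ T : Finset E, T ⊆ F ∧ T.card + 1 = Fintype.card V ∧
      ∀ x y : V, AggJoined r ↑T x y := by
  classical
  refine trim_aux r hr hconn (aggQ r (↑(∅ : Finset E) : Set E)) ∅ (Finset.empty_subset F)
    le_rfl ?_
  simp [aggQ_empty]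

lemma sum_bound [DecidableEq E] {ι : Type*} [DecidableEq ι] (SS : ι → Finset V) (FF : ι → Finset E)
    (hne : ∀ j, (SS j).Nonempty)
    (hend : ∀ j, ∀ e ∈ FF j, ∀ v, v ∈ r e → v ∈ SS j)
    (hconn : ∀ j, ∀ x ∈ SS j, ∀ y ∈ SS j, AggJoined r ↑(FF j) x y)
    (J : Finset ι) :
    Fintype.card V + J.card ≤ aggQ r ↑(J.biUnion FF) + ∑ j ∈ J, (SS j).card := by
  classical
  induction J using Finset.induction with
  | empty => simp [aggQ_empty]
  | @insert j J hj ih =>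
    have hstep := count_step r (F₀ := ↑(FF j)) (W := ↑(J.biUnion FF)) (A := SS j)
      (hne j) (hend j) (fun x hx y hy => hconn j x hx y hy)
    have hcoe : (↑((insert j J).biUnion FF) : Set E) = ↑(FF j) ∪ ↑(J.biUnion FF) := by
      rw [Finset.biUnion_insert, Finset.coe_union]
    rw [← hcoe] at hstep
    rw [Finset.sum_insert hj, Finset.card_insert_of_notMem hj]
    omega

end Steps

section Atoms
variable {V E : Type*} (r : E → Sym2 V)

open Classical in
/-- indicator pair -/
noncomputable def aggInd (S : Finset V) (F : Finset E) : (V → ℕ) × (E → ℕ) :=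
  (fun v => if v ∈ S then 1 else 0, fun e => if e ∈ F then 1 else 0)

lemma sym2_mem_exists (z : Sym2 V) : ∃ v : V, v ∈ z := by
  induction z using Sym2.inductionOn with
  | hf x y => exact ⟨x, by simp⟩

lemma agg_vertex_exists {a : (V → ℕ) × (E → ℕ)} (hagg : IsAgg r a) (hne : a ≠ 0) :
    ∃ v : V, a.1 v ≠ 0 := by
  by_contra hcon
  push_neg at hcon
  apply hne
  have h1 : a.1 = 0 := funext fun v => hcon v
  have h2 : a.2 = 0 := by
    funext e
    obtain ⟨v, hv⟩ := sym2_mem_exists (r e)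
    have := hagg e v hv
    rw [h1] at this
    simpa using this
  exact Prod.ext h1 h2

lemma walk_cross (P : V → Prop) {Es : Set E} {x y : V}
    (h : AggJoined r Es x y) (hx : P x) (hy : ¬ P y) :
    ∃ e ∈ Es, ∃ u w : V, r e = s(u, w) ∧ P u ∧ ¬ P w := by
  induction h with
  | refl => exact absurd hx hy
  | @tail b c h1 h2 ih =>
    obtain ⟨e, he, hre⟩ := h2
    by_cases hb : P b
    · exact ⟨e, he, b, c, hre, hb, hy⟩
    · exact ih hb

/-- Every atom is the indicator of a connected subgraph. -/
lemma atom_struct [Fintype V] [Fintype E] {a : (V → ℕ) × (E → ℕ)}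
    (hatom : IsAtomAgg r a) :
    ∃ (S : Finset V) (F : Finset E), a = aggInd S F ∧ S.Nonempty ∧
      (∀ e ∈ F, ∀ v, v ∈ r e → v ∈ S) ∧
      (∀ x ∈ S, ∀ y ∈ S, AggJoined r ↑F x y) := by
  classical
  obtain ⟨hagg, hne, hdec⟩ := hatom
  set S : Finset V := Finset.univ.filter (fun v => a.1 v ≠ 0) with hS
  set F : Finset E := Finset.univ.filter (fun e => a.2 e ≠ 0) with hF
  have hmemS : ∀ v, v ∈ S ↔ a.1 v ≠ 0 := by intro v; simp [hS]
  have hmemF : ∀ e, e ∈ F ↔ a.2 e ≠ 0 := by intro e; simp [hF]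
  have hendS : ∀ e ∈ F, ∀ v, v ∈ r e → v ∈ S := by
    intro e he v hv
    rw [hmemF] at he
    rw [hmemS]
    have := hagg e v hv
    omega
  -- Step 1 : a = aggInd S F
  have hstep1 : a = aggInd S F := by
    set b := aggInd S F with hb
    set c : (V → ℕ) × (E → ℕ) := (fun v => a.1 v - b.1 v, fun e => a.2 e - b.2 e) with hc
    have hbagg : IsAgg r b := by
      intro e v hv
      by_cases he : e ∈ F
      · have hvS : v ∈ S := hendS e he v hv
        simp [hb, aggInd, he, hvS]
      · simp [hb, aggInd, he]
    have hcagg : IsAgg r c := by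
      intro e v hv
      have h1 := hagg e v hv
      by_cases he : e ∈ F
      · have hvS : v ∈ S := hendS e he v hv
        simp only [hc, hb, aggInd, if_pos he, if_pos hvS]
        omega
      · have : a.2 e = 0 := by
          by_contra hcon; exact he ((hmemF e).mpr hcon)
        simp only [hc, hb, aggInd, if_neg he]
        omega
    have hsum : a = b + c := by
      refine Prod.ext (funext fun v => ?_) (funext fun e => ?_)
      · show a.1 v = b.1 v + (a.1 v - b.1 v)
        by_cases hvS : v ∈ S
        · have : a.1 v ≠ 0 := (hmemS v).mp hvS
          simp only [hb, aggInd, if_pos hvS]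
          omega
        · have : a.1 v = 0 := by
            by_contra hcon; exact hvS ((hmemS v).mpr hcon)
          simp only [hb, aggInd, if_neg hvS]
          omega
      · show a.2 e = b.2 e + (a.2 e - b.2 e)
        by_cases heF : e ∈ F
        · have : a.2 e ≠ 0 := (hmemF e).mp heF
          simp only [hb, aggInd, if_pos heF]
          omega
        · have : a.2 e = 0 := by
            by_contra hcon; exact heF ((hmemF e).mpr hcon)
          simp only [hb, aggInd, if_neg heF]
          omega
    rcases hdec b c hbagg hcagg hsum with h0 | h0
    · exfalso
      obtain ⟨v, hv⟩ := agg_vertex_exists r hagg hne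
      have hvS : v ∈ S := (hmemS v).mpr hv
      have : b.1 v = 1 := by simp [hb, aggInd, hvS]
      rw [h0] at this
      simpa using this
    · rw [hsum, h0, add_zero]
  obtain ⟨v₀, hv₀⟩ := agg_vertex_exists r hagg hne
  have hSne : S.Nonempty := ⟨v₀, (hmemS v₀).mpr hv₀⟩
  refine ⟨S, F, hstep1, hSne, hendS, ?_⟩
  -- Step 2 : connectivity
  intro x hx y hy
  by_contra hxy
  set C : Finset V := S.filter (fun v => AggJoined r ↑F x v) with hC
  set FC : Finset E := F.filter (fun e => ∀ v, v ∈ r e → v ∈ C) with hFC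
  have hCx : x ∈ C := by
    rw [hC, Finset.mem_filter]
    exact ⟨hx, aggJoined_refl r _ _⟩
  have hCS : ∀ v ∈ C, v ∈ S := by
    intro v hv; rw [hC, Finset.mem_filter] at hv; exact hv.1
  have hrep : ∀ e : E, ∃ p q : V, r e = s(p, q) := by
    intro e
    induction (r e) using Sym2.inductionOn with
    | hf p q => exact ⟨p, q, rfl⟩
  have hkey : ∀ e ∈ F, ∀ u, u ∈ r e → u ∈ C → ∀ w, w ∈ r e → w ∈ C := by
    intro e heF u hu huC w hw
    by_cases hwu : w = u
    · rwa [hwu]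
    obtain ⟨p, q, hpq⟩ := hrep e
    have hjoinuw : AggJoined r ↑F u w := by
      rw [hpq, Sym2.mem_iff] at hu hw
      have hstep' : ∀ p' q' : V, r e = s(p', q') → AggJoined r ↑F p' q' :=
        fun p' q' h' => aggJoined_step r (Finset.mem_coe.mpr heF) h'
      rcases hu with rfl | rfl <;> rcases hw with rfl | rfl
      · exact absurd rfl hwu
      · exact hstep' _ _ hpq
      · exact aggJoined_symm r (hstep' _ _ hpq)
      · exact absurd rfl hwu
    have hxu : AggJoined r ↑F x u := by
      rw [hC, Finset.mem_filter] at huC; exact huC.2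
    have hwS : w ∈ S := hendS e heF w hw
    rw [hC, Finset.mem_filter]
    exact ⟨hwS, aggJoined_trans r hxu hjoinuw⟩
  have hendFC : ∀ e ∈ FC, ∀ v, v ∈ r e → v ∈ C := by
    intro e he v hv
    rw [hFC, Finset.mem_filter] at he
    exact he.2 v hv
  have hendRest : ∀ e ∈ F, e ∉ FC → ∀ v, v ∈ r e → v ∈ S ∧ v ∉ C := by
    intro e heF heFC v hv
    refine ⟨hendS e heF v hv, fun hvC => heFC ?_⟩
    rw [hFC, Finset.mem_filter]
    exact ⟨heF, hkey e heF v hv hvC⟩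
  set b' := aggInd C FC with hb'
  set c' := aggInd (S \ C) (F \ FC) with hc'
  have hb'agg : IsAgg r b' := by
    intro e v hv
    by_cases he : e ∈ FC
    · have : v ∈ C := hendFC e he v hv
      simp [hb', aggInd, he, this]
    · simp [hb', aggInd, he]
  have hc'agg : IsAgg r c' := by
    intro e v hv
    by_cases he : e ∈ F \ FC
    · have hm := Finset.mem_sdiff.mp he
      obtain ⟨hvS, hvC⟩ := hendRest e hm.1 hm.2 v hv
      have hvm : v ∈ S \ C := Finset.mem_sdiff.mpr ⟨hvS, hvC⟩
      show (if e ∈ F \ FC then 1 else 0) ≤ (if v ∈ S \ C then 1 else 0)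
      rw [if_pos he, if_pos hvm]
    · show (if e ∈ F \ FC then 1 else 0) ≤ (if v ∈ S \ C then 1 else 0)
      rw [if_neg he]
      exact Nat.zero_le _
  have hsum' : a = b' + c' := by
    rw [hstep1]
    refine Prod.ext (funext fun v => ?_) (funext fun e => ?_)
    · show (if v ∈ S then 1 else 0) = (if v ∈ C then 1 else 0) + (if v ∈ S \ C then 1 else 0)
      by_cases hvC : v ∈ C
      · have : v ∈ S := hCS v hvC
        simp [this, hvC, Finset.mem_sdiff]
      · by_cases hvS : v ∈ S <;> simp [hvS, hvC, Finset.mem_sdiff]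
    · show (if e ∈ F then 1 else 0) = (if e ∈ FC then 1 else 0) + (if e ∈ F \ FC then 1 else 0)
      by_cases heFC : e ∈ FC
      · have : e ∈ F := by rw [hFC, Finset.mem_filter] at heFC; exact heFC.1
        simp [this, heFC, Finset.mem_sdiff]
      · by_cases heF : e ∈ F <;> simp [heF, heFC, Finset.mem_sdiff]
  rcases hdec b' c' hb'agg hc'agg hsum' with h0 | h0
  · have : b'.1 x = 1 := by simp [hb', aggInd, hCx]
    rw [h0] at this
    simpa using this
  · have hyC : y ∉ C := by
      intro hyC
      rw [hC, Finset.mem_filter] at hyC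
      exact hxy hyC.2
    have : c'.1 y = 1 := by
      rw [hc']
      show (if y ∈ S \ C then 1 else 0) = 1
      rw [if_pos (Finset.mem_sdiff.mpr ⟨hy, hyC⟩)]
    rw [h0] at this
    simpa using this

/-- A single vertex is an atom. -/
lemma atom_vertex (v : V) : IsAtomAgg r (aggInd {v} ∅) := by
  classical
  refine ⟨?_, ?_, ?_⟩
  · intro e w hw
    simp [aggInd]
  · intro h0
    have : (aggInd ({v} : Finset V) (∅ : Finset E)).1 v = 0 := by rw [h0]; rfl
    simp [aggInd] at this
  · intro b c hbagg hcagg hsum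
    have hvert : ∀ w : V, b.1 w + c.1 w = (if w ∈ ({v} : Finset V) then 1 else 0) := by
      intro w
      have := congrFun (congrArg Prod.fst hsum) w
      exact this.symm
    have hedge : ∀ e : E, b.2 e + c.2 e = 0 := by
      intro e
      have := congrFun (congrArg Prod.snd hsum) e
      simpa [aggInd] using this.symm
    by_cases hbv : b.1 v = 0
    · left
      refine Prod.ext (funext fun w => ?_) (funext fun e => ?_)
      · show b.1 w = 0
        have := hvert w
        by_cases hwv : w = v
        · subst hwv; simp at this; omega
        · simp only [Finset.mem_singleton, if_neg hwv] at this; omega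
      · show b.2 e = 0
        have := hedge e; omega
    · right
      refine Prod.ext (funext fun w => ?_) (funext fun e => ?_)
      · show c.1 w = 0
        have := hvert w
        by_cases hwv : w = v
        · subst hwv
          simp at this
          omega
        · simp only [Finset.mem_singleton, if_neg hwv] at this; omega
      · show c.2 e = 0
        have := hedge e; omega

open Classical in
/-- A spanning connected edge set gives an atom. -/
lemma atom_conn [Nonempty V] (F : Set E)
    (hconn : ∀ x y : V, AggJoined r F x y) :
    IsAtomAgg r (fun _ => 1, fun e => if e ∈ F then 1 else 0) := by
  classical
  refine ⟨?_, ?_, ?_⟩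
  · intro e w hw
    show (if e ∈ F then 1 else 0) ≤ 1
    split <;> simp
  · intro h0
    have : (1 : ℕ) = 0 := congrFun (congrArg Prod.fst h0) (Classical.arbitrary V)
    simp at this
  · intro b c hbagg hcagg hsum
    have hvert : ∀ w : V, b.1 w + c.1 w = 1 := by
      intro w
      exact (congrFun (congrArg Prod.fst hsum) w).symm
    have hedge : ∀ e : E, b.2 e + c.2 e = (if e ∈ F then 1 else 0) := by
      intro e
      exact (congrFun (congrArg Prod.snd hsum) e).symm
    by_cases hall : ∀ w : V, b.1 w ≠ 0
    · right
      refine Prod.ext (funext fun w => ?_) (funext fun e => ?_)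
      · show c.1 w = 0
        have h1 := hvert w
        have h2 := hall w
        omega
      · show c.2 e = 0
        obtain ⟨v, hv⟩ := sym2_mem_exists (r e)
        have h1 := hcagg e v hv
        have h2 := hvert v
        have h3 := hall v
        omega
    · push_neg at hall
      obtain ⟨v₀, hv₀⟩ := hall
      left
      have hzero : ∀ w : V, b.1 w = 0 := by
        intro w
        by_contra hw
        obtain ⟨e, he, u, u', hre, hu, hu'⟩ :=
          walk_cross r (fun z => b.1 z ≠ 0) (hconn w v₀) hw (by simpa using hv₀)
        have hbb : b.2 e ≤ b.1 u' := hbagg e u' (by rw [hre]; simp)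
        have hcc : c.2 e ≤ c.1 u := hcagg e u (by rw [hre]; simp)
        have h1 := hvert u
        have h2 := hvert u'
        have h3 := hedge e
        rw [if_pos he] at h3
        simp only [not_not] at hu'
        omega
      refine Prod.ext (funext fun w => hzero w) (funext fun e => ?_)
      show b.2 e = 0
      obtain ⟨v, hv⟩ := sym2_mem_exists (r e)
      have := hbagg e v hv
      rw [hzero v] at this
      omega

end Atoms


section MainAux
variable {V E : Type*} [Fintype V] [Fintype E] [Nonempty V] (r : E → Sym2 V)

open Classical in
/-- Construction direction. -/
lemma spanning_trees_give_element
    (k : ℕ) (hk : 2 ≤ k)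
    (Es : Fin k → Set E)
    (hdisj : ∀ i j, i ≠ j → Disjoint (Es i) (Es j))
    (hconn : ∀ i, ∀ x y : V, AggJoined r (Es i) x y) :
    (∃ a : (V → ℕ) × (E → ℕ), IsAgg r a ∧
      (∃ b : Fin k → (V → ℕ) × (E → ℕ), (∀ i, IsAtomAgg r (b i)) ∧ a = ∑ i, b i) ∧
      (∃ c : Fin ((k - 1) * Fintype.card V + 1) → (V → ℕ) × (E → ℕ),
        (∀ i, IsAtomAgg r (c i)) ∧ a = ∑ i, c i)) := by
  classical
  have hkpos : 0 < k := by omega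
  haveI : NeZero k := ⟨by omega⟩
  set n := Fintype.card V with hn
  set U : Set E := ⋃ i, Es i with hU
  set a : (V → ℕ) × (E → ℕ) := (fun _ => k, fun e => if e ∈ U then 1 else 0) with ha
  have hUconn : ∀ x y : V, AggJoined r U x y := by
    intro x y
    exact aggJoined_mono r (Set.subset_iUnion Es ⟨0, hkpos⟩) (hconn ⟨0, hkpos⟩ x y)
  refine ⟨a, ?_, ?_, ?_⟩
  · intro e v hv
    show (if e ∈ U then 1 else 0) ≤ k
    split <;> omega
  · -- k atoms : the spanning connected pieces
    set b : Fin k → (V → ℕ) × (E → ℕ) :=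
      fun i => (fun _ => 1, fun e => if e ∈ Es i then 1 else 0) with hb
    refine ⟨b, fun i => atom_conn r (Es i) (hconn i), ?_⟩
    refine Prod.ext (funext fun v => ?_) (funext fun e => ?_)
    · show (k : ℕ) = (∑ i, b i).1 v
      rw [Prod.fst_sum, Finset.sum_apply]
      simp [hb]
    · show (if e ∈ U then 1 else 0) = (∑ i, b i).2 e
      rw [Prod.snd_sum, Finset.sum_apply]
      by_cases he : e ∈ U
      · rw [if_pos he]
        obtain ⟨i₀, hi₀⟩ : ∃ i, e ∈ Es i := by
          rwa [hU, Set.mem_iUnion] at he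
        rw [Finset.sum_eq_single i₀]
        · simp [hb, hi₀]
        · intro j _ hj
          have : e ∉ Es j := fun hc =>
            (hdisj j i₀ hj).le_bot ⟨hc, hi₀⟩
          simp [hb, this]
        · intro hc
          exact absurd (Finset.mem_univ i₀) hc
      · rw [if_neg he]
        have : ∀ i, e ∉ Es i := by
          intro i hc
          exact he (by rw [hU, Set.mem_iUnion]; exact ⟨i, hc⟩)
        symm
        apply Finset.sum_eq_zero
        intro j _
        simp [hb, this j]
  · -- (k-1)*n + 1 atoms
    set σ : Fin n ≃ V := (Fintype.equivFin V).symm with hσ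
    set big : (V → ℕ) × (E → ℕ) := (fun _ => 1, fun e => if e ∈ U then 1 else 0) with hbig
    set rest : Fin ((k - 1) * n) → (V → ℕ) × (E → ℕ) :=
      fun j => aggInd {σ (finProdFinEquiv.symm j).2} ∅ with hrest
    set c : Fin ((k - 1) * n + 1) → (V → ℕ) × (E → ℕ) := Fin.cons big rest with hc
    refine ⟨c, ?_, ?_⟩
    · intro i
      refine Fin.cases ?_ ?_ i
      · exact atom_conn r U hUconn
      · intro j
        exact atom_vertex r _
    · have hsum : ∑ i, c i = big + ∑ j, rest j := by
        rw [hc, Fin.sum_cons]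
      rw [hsum]
      have hrest_sum_fst : ∀ v, (∑ j, rest j).1 v = k - 1 := by
        intro v
        rw [Prod.fst_sum, Finset.sum_apply]
        have : ∀ j, (rest j).1 v
            = if v ∈ ({σ (finProdFinEquiv.symm j).2} : Finset V) then 1 else 0 := by
          intro j
          rw [hrest]
          rfl
        calc ∑ j, (rest j).1 v
            = ∑ j : Fin ((k-1)*n),
              (if v ∈ ({σ (finProdFinEquiv.symm j).2} : Finset V) then 1 else 0) := by
              exact Finset.sum_congr rfl fun j _ => this j
          _ = ∑ p : Fin (k-1) × Fin n,
              (if v ∈ ({σ p.2} : Finset V) then 1 else 0) := by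
              rw [← Equiv.sum_comp finProdFinEquiv
                (fun j => if v ∈ ({σ (finProdFinEquiv.symm j).2} : Finset V) then 1 else 0)]
              exact Finset.sum_congr rfl fun p _ => by rw [Equiv.symm_apply_apply]
          _ = ∑ _i : Fin (k-1), ∑ q : Fin n, (if v ∈ ({σ q} : Finset V) then 1 else 0) := by
              rw [Fintype.sum_prod_type]
          _ = ∑ _i : Fin (k-1), 1 := by
              refine Finset.sum_congr rfl fun i _ => ?_
              have : ∀ q : Fin n, (v ∈ ({σ q} : Finset V)) ↔ (q = σ.symm v) := by
                intro q
                rw [Finset.mem_singleton]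
                constructor
                · intro h; rw [h, Equiv.symm_apply_apply]
                · intro h; rw [h, Equiv.apply_symm_apply]
              calc ∑ q : Fin n, (if v ∈ ({σ q} : Finset V) then 1 else 0)
                  = ∑ q : Fin n, (if q = σ.symm v then 1 else 0) :=
                    Finset.sum_congr rfl fun q _ => by rw [if_congr (this q) rfl rfl]
                _ = 1 := by rw [Finset.sum_ite_eq' Finset.univ (σ.symm v) (fun _ => 1)]
                            simp
          _ = k - 1 := by rw [Finset.sum_const]; simp
      have hrest_sum_snd : ∀ e, (∑ j, rest j).2 e = 0 := by
        intro e
        rw [Prod.snd_sum, Finset.sum_apply]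
        apply Finset.sum_eq_zero
        intro j _
        rw [hrest]
        show (if e ∈ (∅ : Finset E) then 1 else 0) = 0
        simp
      refine Prod.ext (funext fun v => ?_) (funext fun e => ?_)
      · show (k : ℕ) = (big + ∑ j, rest j).1 v
        have : (big + ∑ j, rest j).1 v = big.1 v + (∑ j, rest j).1 v := rfl
        rw [this, hrest_sum_fst v]
        show k = 1 + (k - 1)
        omega
      · show (if e ∈ U then 1 else 0) = (big + ∑ j, rest j).2 e
        have : (big + ∑ j, rest j).2 e = big.2 e + (∑ j, rest j).2 e := rfl
        rw [this, hrest_sum_snd e, add_zero]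

end MainAux

section MainHard
variable {V E : Type*} [Fintype V] [Fintype E] [Nonempty V] (r : E → Sym2 V)

lemma element_gives_spanning_trees (hr : ∀ e : E, ¬ (r e).IsDiag)
    (k : ℕ) (hk : 2 ≤ k)
    (a : (V → ℕ) × (E → ℕ)) (hagg : IsAgg r a)
    (b : Fin k → (V → ℕ) × (E → ℕ)) (hb : ∀ i, IsAtomAgg r (b i)) (hab : a = ∑ i, b i)
    (c : Fin ((k - 1) * Fintype.card V + 1) → (V → ℕ) × (E → ℕ))
    (hc : ∀ j, IsAtomAgg r (c j)) (hac : a = ∑ j, c j) :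
    ∃ Es : Fin k → Set E,
      (∀ i j, i ≠ j → Disjoint (Es i) (Es j)) ∧
      ∀ i, Nat.card ↥(Es i) + 1 = Fintype.card V ∧
        ∀ x y : V, AggJoined r (Es i) x y := by
  classical
  choose Sb Fb hbeq hbne hbend hbconn using fun i => atom_struct r (hb i)
  choose Sc Fc hceq hcne hcend hcconn using fun j => atom_struct r (hc j)
  -- pointwise formulas
  have haV : ∀ v, a.1 v = ∑ i, (b i).1 v := fun v => by
    rw [hab, Prod.fst_sum, Finset.sum_apply]
  have haVc : ∀ v, a.1 v = ∑ j, (c j).1 v := fun v => by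
    rw [hac, Prod.fst_sum, Finset.sum_apply]
  have haE : ∀ e, a.2 e = ∑ i, (b i).2 e := fun e => by
    rw [hab, Prod.snd_sum, Finset.sum_apply]
  have haEc : ∀ e, a.2 e = ∑ j, (c j).2 e := fun e => by
    rw [hac, Prod.snd_sum, Finset.sum_apply]
  -- membership values
  have hb1 : ∀ i v, v ∈ Sb i → (b i).1 v = 1 := fun i v hv => by
    rw [hbeq i]; exact if_pos hv
  have hb1n : ∀ i v, v ∉ Sb i → (b i).1 v = 0 := fun i v hv => by
    rw [hbeq i]; exact if_neg hv
  have hb2 : ∀ i e, e ∈ Fb i → (b i).2 e = 1 := fun i e he => by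
    rw [hbeq i]; exact if_pos he
  have hb2n : ∀ i e, e ∉ Fb i → (b i).2 e = 0 := fun i e he => by
    rw [hbeq i]; exact if_neg he
  have hc1 : ∀ j v, v ∈ Sc j → (c j).1 v = 1 := fun j v hv => by
    rw [hceq j]; exact if_pos hv
  have hc1n : ∀ j v, v ∉ Sc j → (c j).1 v = 0 := fun j v hv => by
    rw [hceq j]; exact if_neg hv
  have hc2 : ∀ j e, e ∈ Fc j → (c j).2 e = 1 := fun j e he => by
    rw [hceq j]; exact if_pos he
  have hc2n : ∀ j e, e ∉ Fc j → (c j).2 e = 0 := fun j e he => by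
    rw [hceq j]; exact if_neg he
  -- s
  set s := ∑ v, a.1 v with hs
  have hcard1 : ∀ i, ∑ v, (b i).1 v = (Sb i).card := by
    intro i
    calc ∑ v, (b i).1 v = ∑ v ∈ Sb i, (b i).1 v :=
          (Finset.sum_subset (Finset.subset_univ _) (fun v _ hv => hb1n i v hv)).symm
      _ = ∑ _v ∈ Sb i, 1 := Finset.sum_congr rfl (fun v hv => hb1 i v hv)
      _ = (Sb i).card := by rw [Finset.sum_const, smul_eq_mul, mul_one]
  have hcard1c : ∀ j, ∑ v, (c j).1 v = (Sc j).card := by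
    intro j
    calc ∑ v, (c j).1 v = ∑ v ∈ Sc j, (c j).1 v :=
          (Finset.sum_subset (Finset.subset_univ _) (fun v _ hv => hc1n j v hv)).symm
      _ = ∑ _v ∈ Sc j, 1 := Finset.sum_congr rfl (fun v hv => hc1 j v hv)
      _ = (Sc j).card := by rw [Finset.sum_const, smul_eq_mul, mul_one]
  have hsb : s = ∑ i, (Sb i).card := by
    rw [hs]
    calc ∑ v, a.1 v = ∑ v, ∑ i, (b i).1 v := Finset.sum_congr rfl fun v _ => haV v
      _ = ∑ i, ∑ v, (b i).1 v := Finset.sum_comm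
      _ = ∑ i, (Sb i).card := Finset.sum_congr rfl fun i _ => hcard1 i
  have hsc : s = ∑ j, (Sc j).card := by
    rw [hs]
    calc ∑ v, a.1 v = ∑ v, ∑ j, (c j).1 v := Finset.sum_congr rfl fun v _ => haVc v
      _ = ∑ j, ∑ v, (c j).1 v := Finset.sum_comm
      _ = ∑ j, (Sc j).card := Finset.sum_congr rfl fun j _ => hcard1c j
  have hble : ∀ i v, (b i).1 v ≤ 1 := by
    intro i v
    by_cases hv : v ∈ Sb i
    · rw [hb1 i v hv]
    · rw [hb1n i v hv]; omega
  have havle : ∀ v, a.1 v ≤ k := by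
    intro v
    rw [haV v]
    calc ∑ i, (b i).1 v ≤ ∑ _i : Fin k, 1 := Finset.sum_le_sum fun i _ => hble i v
      _ = k := by rw [Finset.sum_const, smul_eq_mul, mul_one, Finset.card_univ,
            Fintype.card_fin]
  have hsle : s ≤ k * (Fintype.card V) := by
    rw [hs]
    calc ∑ v, a.1 v ≤ ∑ _v : V, k := Finset.sum_le_sum fun v _ => havle v
      _ = (Fintype.card V) * k := by rw [Finset.sum_const, smul_eq_mul, Finset.card_univ]
      _ = k * (Fintype.card V) := Nat.mul_comm (Fintype.card V) k
  -- edge support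
  set U : Finset E := Finset.univ.biUnion Fc with hU
  have hUmem : ∀ e, e ∈ U ↔ ∃ j, e ∈ Fc j := by
    intro e
    rw [hU, Finset.mem_biUnion]
    constructor
    · rintro ⟨j, -, hj⟩; exact ⟨j, hj⟩
    · rintro ⟨j, hj⟩; exact ⟨j, Finset.mem_univ j, hj⟩
  have hFbU : ∀ i, ∀ e ∈ Fb i, e ∈ U := by
    intro i e he
    have h1 : (1 : ℕ) ≤ a.2 e := by
      rw [haE e]
      calc (1 : ℕ) = (b i).2 e := (hb2 i e he).symm
        _ ≤ ∑ i', (b i').2 e :=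
          Finset.single_le_sum (f := fun i' => (b i').2 e)
            (fun i' _ => Nat.zero_le _) (Finset.mem_univ i)
    by_contra hcon
    have : ∀ j, e ∉ Fc j := fun j hj => hcon ((hUmem e).mpr ⟨j, hj⟩)
    have : a.2 e = 0 := by
      rw [haEc e]
      exact Finset.sum_eq_zero fun j _ => hc2n j e (this j)
    omega
  set q := aggQ r (↑U : Set E) with hq
  have hqpos : 1 ≤ q := aggQ_pos r _
  -- (d) global bound from the long decomposition
  have hd : (Fintype.card V) + ((k - 1) * Fintype.card V + 1) ≤ q + s := by
    have := sum_bound r Sc Fc hcne hcend hcconn Finset.univ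
    rw [Finset.card_univ, Fintype.card_fin, ← hsc] at this
    exact this
  -- (e) per-piece bound from the short decomposition
  have he : ∀ i, q + (Sb i).card ≤ (Fintype.card V) + 1 := by
    intro i
    refine conn_bound r (fun x hx y hy => ?_)
    exact aggJoined_mono r (fun e' he' => by
      simp only [Finset.mem_coe] at *
      exact hFbU i e' he') (hbconn i x hx y hy)
  have hef : k * q + s ≤ k * (Fintype.card V) + k := by
    have hsum := Finset.sum_le_sum (s := (Finset.univ : Finset (Fin k)))
      (f := fun i => q + (Sb i).card) (g := fun _ => (Fintype.card V) + 1) (fun i _ => he i)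
    rw [Finset.sum_add_distrib, Finset.sum_const, Finset.sum_const, Finset.card_univ,
      Fintype.card_fin, smul_eq_mul, smul_eq_mul, ← hsb, Nat.mul_add, Nat.mul_one] at hsum
    exact hsum
  -- arithmetic : q = 1, s = k * (Fintype.card V)
  have hCn : (k - 1) * (Fintype.card V) + (Fintype.card V) = k * (Fintype.card V) := by
    have h1 : k - 1 + 1 = k := by omega
    calc (k - 1) * (Fintype.card V) + (Fintype.card V)
        = (k - 1 + 1) * (Fintype.card V) := by ring
      _ = k * (Fintype.card V) := by rw [h1]
  have h2q : 2 * (q - 1) ≤ k * (q - 1) := Nat.mul_le_mul hk (le_refl (q - 1))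
  have hkq : k * q = k * (q - 1) + k := by
    have : q = (q - 1) + 1 := by omega
    rw [this, Nat.mul_add, Nat.mul_one, Nat.add_sub_cancel]
  have hq1 : q = 1 ∧ s = k * (Fintype.card V) := by
    set A := k * (q - 1) with hA
    set B := k * (Fintype.card V) with hB
    set C := (k - 1) * (Fintype.card V) with hC
    omega
  obtain ⟨hq1, hskn⟩ := hq1
  -- each Sb i = univ
  have hSble : ∀ i, (Sb i).card ≤ (Fintype.card V) := by
    intro i
    have := he i
    omega
  have hSbcard : ∀ i, (Sb i).card = (Fintype.card V) := by
    by_contra hcon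
    push_neg at hcon
    obtain ⟨i₀, hi₀⟩ := hcon
    have hstrict : ∑ i, (Sb i).card < ∑ _i : Fin k, (Fintype.card V) := by
      refine Finset.sum_lt_sum (fun i _ => hSble i) ⟨i₀, Finset.mem_univ i₀, ?_⟩
      exact lt_of_le_of_ne (hSble i₀) hi₀
    rw [Finset.sum_const, smul_eq_mul, Finset.card_univ, Fintype.card_fin] at hstrict
    omega
  have hSbuniv : ∀ i, Sb i = Finset.univ := fun i =>
    Finset.eq_univ_of_card _ (hSbcard i)
  -- edge multiplicities are at most 1
  have hmul : ∀ e, a.2 e ≤ 1 := by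
    intro e
    by_contra hcon
    push_neg at hcon
    set Jset := Finset.univ.filter (fun j => e ∈ Fc j) with hJset
    have hJeq : a.2 e = Jset.card := by
      rw [haEc e]
      calc ∑ j, (c j).2 e = ∑ j ∈ Jset, (c j).2 e :=
            (Finset.sum_subset (Finset.filter_subset _ _) (fun j _ hj =>
              hc2n j e (fun hFc => hj (Finset.mem_filter.mpr
                ⟨Finset.mem_univ j, hFc⟩)))).symm
        _ = ∑ _j ∈ Jset, 1 := Finset.sum_congr rfl (fun j hj =>
              hc2 j e (Finset.mem_filter.mp hj).2)
        _ = Jset.card := by rw [Finset.sum_const, smul_eq_mul, mul_one]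
    have h2 : 1 < Jset.card := by omega
    obtain ⟨j1, j2, hj1, hj2, hj12⟩ := Finset.one_lt_card_iff.mp h2
    simp only [hJset, Finset.mem_filter] at hj1 hj2
    obtain ⟨x₀, y₀, hxy, hre⟩ := sym2_nondiag (hr e)
    have hx₀ : x₀ ∈ Sc j2 := hcend j2 e hj2.2 x₀ (by rw [hre]; simp)
    have hy₀ : y₀ ∈ Sc j2 := hcend j2 e hj2.2 y₀ (by rw [hre]; simp)
    set W : Finset E := (Finset.univ.erase j2).biUnion Fc with hW
    have heW : e ∈ W := by
      rw [hW, Finset.mem_biUnion]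
      exact ⟨j1, Finset.mem_erase.mpr ⟨hj12, Finset.mem_univ j1⟩, hj1.2⟩
    have hjoinW : AggJoined r (↑W : Set E) x₀ y₀ :=
      aggJoined_step r (Finset.mem_coe.mpr heW) hre
    have hsb2 := sum_bound r Sc Fc hcne hcend hcconn (Finset.univ.erase j2)
    rw [← hW] at hsb2
    have hcarderase : (Finset.univ.erase j2).card = ((k - 1) * Fintype.card V + 1) - 1 := by
      rw [Finset.card_erase_of_mem (Finset.mem_univ j2), Finset.card_univ, Fintype.card_fin]
    rw [hcarderase] at hsb2
    have href := count_step_refined r (F₀ := ↑(Fc j2)) (W := (↑W : Set E)) (A := Sc j2)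
      (fun e' he' v hv => hcend j2 e' (Finset.mem_coe.mp he') v hv)
      (fun x hx y hy => hcconn j2 x hx y hy)
      hx₀ hy₀ hxy hjoinW
    have hUW : (↑(Fc j2) : Set E) ∪ (↑W : Set E) = (↑U : Set E) := by
      rw [← Finset.coe_union]
      congr 1
      rw [hU, hW, ← Finset.biUnion_insert, Finset.insert_erase (Finset.mem_univ j2)]
    rw [hUW] at href
    have hsplit : (∑ j ∈ Finset.univ.erase j2, (Sc j).card) + (Sc j2).card = s := by
      rw [Finset.sum_erase_add Finset.univ _ (Finset.mem_univ j2), ← hsc]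
    -- combine
    have hMge : 1 ≤ ((k - 1) * Fintype.card V + 1) := by omega
    have hfin : (Fintype.card V) + (((k - 1) * Fintype.card V + 1) - 1) + 2 ≤ 1 + s := by
      calc (Fintype.card V) + (((k - 1) * Fintype.card V + 1) - 1) + 2 ≤ (aggQ r (↑W : Set E) + ∑ j ∈ Finset.univ.erase j2, (Sc j).card) + 2 := by
            omega
        _ = (aggQ r (↑W : Set E) + 2) + ∑ j ∈ Finset.univ.erase j2, (Sc j).card := by ring
        _ ≤ (aggQ r (↑U : Set E) + (Sc j2).card) + ∑ j ∈ Finset.univ.erase j2, (Sc j).card := by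
            omega
        _ = aggQ r (↑U : Set E) + ((∑ j ∈ Finset.univ.erase j2, (Sc j).card) + (Sc j2).card) := by
            ring
        _ = 1 + s := by rw [hsplit, ← hq, hq1]
    have hCn2 : (k - 1) * (Fintype.card V) + (Fintype.card V) = k * (Fintype.card V) := hCn
    set B := k * (Fintype.card V) with hB
    set C := (k - 1) * (Fintype.card V) with hC
    omega
  -- the Fb i are pairwise disjoint
  have hFbdisj : ∀ i j, i ≠ j → ∀ e, e ∈ Fb i → e ∈ Fb j → False := by
    intro i j hij e hei hej
    have h2 : 2 ≤ a.2 e := by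
      rw [haE e]
      calc (2 : ℕ) = ∑ x ∈ ({i, j} : Finset (Fin k)), (b x).2 e := by
            rw [Finset.sum_pair hij, hb2 i e hei, hb2 j e hej]
        _ ≤ ∑ x, (b x).2 e :=
            Finset.sum_le_sum_of_subset (Finset.subset_univ _)
    have := hmul e
    omega
  -- extract spanning trees
  have htrimmed : ∀ i, ∃ T : Finset E, T ⊆ Fb i ∧ T.card + 1 = (Fintype.card V) ∧
      ∀ x y : V, AggJoined r ↑T x y := by
    intro i
    refine trim r hr (F := Fb i) ?_
    intro x y
    exact hbconn i x (by rw [hSbuniv i]; exact Finset.mem_univ x)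
      y (by rw [hSbuniv i]; exact Finset.mem_univ y)
  choose T hT1 hT2 hT3 using htrimmed
  refine ⟨fun i => (↑(T i) : Set E), ?_, ?_⟩
  · intro i j hij
    rw [Set.disjoint_left]
    intro e hei hej
    exact hFbdisj i j hij e (hT1 i (Finset.mem_coe.mp hei)) (hT1 j (Finset.mem_coe.mp hej))
  · intro i
    refine ⟨?_, hT3 i⟩
    rw [Nat.card_coe_set_eq, Set.ncard_coe_finset]
    exact hT2 i

end MainHard

/-- **Refined elasticity equality via spanning tree packing**: there is an element of
`A(G)` which is both a sum of `k` atoms and a sum of `(k−1)·|V| + 1` atoms if and only if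
`G` contains `k` pairwise edge-disjoint spanning trees. -/
theorem refined_elasticity_eq_iff_spanning_trees {V E : Type*} [Fintype V] [Fintype E]
    [Nonempty V]
    (r : E → Sym2 V) (hr : ∀ e : E, ¬ (r e).IsDiag)
    (k : ℕ) (hk : 2 ≤ k) :
    (∃ a : (V → ℕ) × (E → ℕ), IsAgg r a ∧
      (∃ b : Fin k → (V → ℕ) × (E → ℕ), (∀ i, IsAtomAgg r (b i)) ∧ a = ∑ i, b i) ∧
      (∃ c : Fin ((k - 1) * Fintype.card V + 1) → (V → ℕ) × (E → ℕ),
        (∀ i, IsAtomAgg r (c i)) ∧ a = ∑ i, c i)) ↔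
    (∃ Es : Fin k → Set E,
      (∀ i j, i ≠ j → Disjoint (Es i) (Es j)) ∧
      ∀ i, Nat.card ↥(Es i) + 1 = Fintype.card V ∧
        ∀ x y : V, AggJoined r (Es i) x y) := by
  constructor
  · rintro ⟨a, hagg, ⟨b, hb, hab⟩, ⟨c, hc, hac⟩⟩
    exact element_gives_spanning_trees r hr k hk a hagg b hb hab c hc hac
  · rintro ⟨Es, hdisj, hprop⟩
    exact spanning_trees_give_element r k hk Es hdisj (fun i => (hprop i).2)
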